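/- arXiv:1509.04309 — 3 statements merged into one kernel-verified Lean document; each statement's English description precedes it below -/
import Mathlib

section
/- Let m ≥ n ≥ 1. The convex hull of the Stiefel manifold Q = {X ∈ ℝ^{m×n} : XᵀX = Iₙ} equals the unit spectral-norm ball, i.e., convexHull(Q) = {X ∈ ℝ^{m×n} : ‖X‖₂ ≤ 1}. -/
open Matrix

/-- The spectral norm (largest singular value) of a real matrix, defined as the
operator norm of the induced linear map between Euclidean spaces. -/
noncomputable def matSpectralNorm {m n : ℕ} (A : Matrix (Fin m) (Fin n) ℝ) : ℝ :=
  ‖LinearMap.toContinuousLinearMap (Matrix.toEuclideanLin A)‖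

private lemma stiefel_inner_toEuclideanLin {m n : ℕ} (A : Matrix (Fin m) (Fin n) ℝ)
    (v w : EuclideanSpace ℝ (Fin n)) :
    (inner ℝ (Matrix.toEuclideanLin A v) (Matrix.toEuclideanLin A w) : ℝ)
      = (WithLp.equiv 2 _ v) ⬝ᵥ ((Aᵀ * A) *ᵥ (WithLp.equiv 2 _ w)) := by
  rw [Matrix.toEuclideanLin_apply, Matrix.toEuclideanLin_apply,
    EuclideanSpace.inner_eq_star_dotProduct]
  simp [Matrix.dotProduct_mulVec, Matrix.vecMul_transpose, ← Matrix.mulVec_mulVec]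
  rw [← Matrix.dotProduct_mulVec, ← Matrix.dotProduct_mulVec, dotProduct_comm]

private lemma stiefel_spectralNorm_le_one {m n : ℕ} (X : Matrix (Fin m) (Fin n) ℝ)
    (hX : Xᵀ * X = 1) : matSpectralNorm X ≤ 1 := by
  refine ContinuousLinearMap.opNorm_le_bound _ zero_le_one fun v => ?_
  have h : ‖(Matrix.toEuclideanLin X) v‖ = ‖v‖ := by
    have h1 : (inner ℝ (Matrix.toEuclideanLin X v) (Matrix.toEuclideanLin X v) : ℝ)
        = (inner ℝ v v : ℝ) := by
      rw [stiefel_inner_toEuclideanLin, hX, EuclideanSpace.inner_eq_star_dotProduct]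
      simp
    have := congrArg Real.sqrt h1
    rwa [real_inner_self_eq_norm_sq, real_inner_self_eq_norm_sq,
      Real.sqrt_sq (norm_nonneg _), Real.sqrt_sq (norm_nonneg _)] at this
  rw [LinearMap.coe_toContinuousLinearMap', h, one_mul]

private lemma stiefel_ball_convex {m n : ℕ} :
    Convex ℝ {X : Matrix (Fin m) (Fin n) ℝ | matSpectralNorm X ≤ 1} := by
  intro X hX Y hY a b ha hb hab
  simp only [Set.mem_setOf_eq, matSpectralNorm] at *
  calc ‖LinearMap.toContinuousLinearMap (Matrix.toEuclideanLin (a • X + b • Y))‖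
      = ‖a • LinearMap.toContinuousLinearMap (Matrix.toEuclideanLin X)
        + b • LinearMap.toContinuousLinearMap (Matrix.toEuclideanLin Y)‖ := by
        congr 1; ext v; simp [Matrix.toEuclideanLin_apply, Matrix.add_mulVec,
          Matrix.smul_mulVec]
    _ ≤ a * ‖LinearMap.toContinuousLinearMap (Matrix.toEuclideanLin X)‖
        + b * ‖LinearMap.toContinuousLinearMap (Matrix.toEuclideanLin Y)‖ := by
        refine (norm_add_le _ _).trans ?_
        refine add_le_add ((ContinuousLinearMap.opNorm_smul_le _ _).trans ?_)
          ((ContinuousLinearMap.opNorm_smul_le _ _).trans ?_) <;>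
          rw [Real.norm_eq_abs] <;> first | rw [abs_of_nonneg ha] | rw [abs_of_nonneg hb]
    _ ≤ a * 1 + b * 1 := by gcongr
    _ = 1 := by linarith

/-- Existence of the "U" factor in the (reduced) SVD: if `Wᵀ W` is diagonal with
nonnegative entries `lam`, there is `U` with orthonormal columns and
`U * diagonal √lam = W`. -/
private lemma stiefel_exists_U {m n : ℕ} (hmn : n ≤ m) (W : Matrix (Fin m) (Fin n) ℝ)
    (lam : Fin n → ℝ) (hlam0 : ∀ i, 0 ≤ lam i) (hW : Wᵀ * W = Matrix.diagonal lam) :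
    ∃ U : Matrix (Fin m) (Fin n) ℝ,
      Uᵀ * U = 1 ∧ U * Matrix.diagonal (fun i => Real.sqrt (lam i)) = W := by
  classical
  set σ : Fin n → ℝ := fun i => Real.sqrt (lam i) with hσdef
  have hσsq : ∀ i, σ i * σ i = lam i := fun i => Real.mul_self_sqrt (hlam0 i)
  set col : Fin n → EuclideanSpace ℝ (Fin m) :=
    fun i => (WithLp.equiv 2 (Fin m → ℝ)).symm (fun k => W k i) with hcoldef
  have hcol : ∀ i j, (inner ℝ (col i) (col j) : ℝ) = Matrix.diagonal lam i j := by
    intro i j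
    rw [← hW, Matrix.mul_apply, PiLp.inner_apply]
    simp [hcoldef, Matrix.transpose_apply]
    exact Finset.sum_congr rfl fun k _ => mul_comm _ _
  have hcol0 : ∀ i, lam i = 0 → col i = 0 := by
    intro i hi
    have : (inner ℝ (col i) (col i) : ℝ) = 0 := by
      rw [hcol i i]; simp [Matrix.diagonal_apply, hi]
    exact inner_self_eq_zero.mp this
  set s : Set (Fin m) := {j | ∃ h : (j : ℕ) < n, σ ⟨j, h⟩ ≠ 0} with hsdef
  set vf : Fin m → EuclideanSpace ℝ (Fin m) :=
    fun j => if h : (j : ℕ) < n then (σ ⟨j, h⟩)⁻¹ • col ⟨j, h⟩ else 0 with hvfdef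
  have hON : Orthonormal ℝ (s.restrict vf) := by
    rw [orthonormal_iff_ite]
    rintro ⟨a, ha, hsa⟩ ⟨c, hc, hsc⟩
    simp only [Set.restrict, Set.domRestrict_apply, hvfdef, dif_pos ha, dif_pos hc]
    rw [real_inner_smul_left, real_inner_smul_right, hcol, Matrix.diagonal_apply]
    by_cases h : (⟨a, ha⟩ : Fin n) = ⟨c, hc⟩
    · have hac : a = c := Fin.ext (congrArg (Fin.val : Fin n → ℕ) h)
      rw [if_pos h]
      have h2 : (Subtype.mk a ⟨ha, hsa⟩ : s) = ⟨c, hc, hsc⟩ := Subtype.ext hac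
      rw [if_pos h2, ← h, ← hσsq ⟨a, ha⟩]
      field_simp
    · rw [if_neg h, mul_zero, mul_zero]
      have h2 : (Subtype.mk a ⟨ha, hsa⟩ : s) ≠ ⟨c, hc, hsc⟩ := by
        intro hh
        have hac : a = c := Subtype.ext_iff.mp hh
        subst hac
        exact h rfl
      rw [if_neg h2]
  have hcard : Module.finrank ℝ (EuclideanSpace ℝ (Fin m)) = Fintype.card (Fin m) := by simp
  obtain ⟨b, hb⟩ := hON.exists_orthonormalBasis_extension_of_card_eq hcard
  refine ⟨Matrix.of fun k i => b (Fin.castLE hmn i) k, ?_, ?_⟩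
  · ext i j
    rw [Matrix.mul_apply, Matrix.one_apply]
    have := orthonormal_iff_ite.mp b.orthonormal (Fin.castLE hmn i) (Fin.castLE hmn j)
    rw [PiLp.inner_apply] at this
    simp only [RCLike.inner_apply, starRingEnd_apply, star_trivial] at this
    rw [show (∑ k, (Matrix.of fun k i => b (Fin.castLE hmn i) k)ᵀ i k *
        (Matrix.of fun k i => b (Fin.castLE hmn i) k) k j) =
        ∑ k, b (Fin.castLE hmn j) k * b (Fin.castLE hmn i) k from
          Finset.sum_congr rfl fun k _ => mul_comm _ _, this]
    simp [Fin.castLE_inj]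
  · ext k i
    rw [Matrix.mul_diagonal]
    by_cases hσi : σ i = 0
    · have hli : lam i = 0 := by
        have := hσsq i; rw [hσi, mul_zero] at this; exact this.symm
      have : col i = 0 := hcol0 i hli
      have hWki : W k i = 0 := by
        have := congrFun (congrArg (WithLp.equiv 2 (Fin m → ℝ)) this) k
        simpa [hcoldef] using this
      simp [hσi, hWki]
    · have hmem : (Fin.castLE hmn i : Fin m) ∈ s := by
        refine ⟨i.2, ?_⟩
        exact hσi
      have := hb _ hmem
      have hvfi : vf (Fin.castLE hmn i) = (σ i)⁻¹ • col i := by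
        have hlt : ((Fin.castLE hmn i : Fin m) : ℕ) < n := i.2
        simp only [hvfdef, dif_pos hlt]
        have heq : (⟨((Fin.castLE hmn i : Fin m) : ℕ), hlt⟩ : Fin n) = i := Fin.ext rfl
        rw [heq]
      have hgoal : (Matrix.of fun k i => b (Fin.castLE hmn i) k) k i
          = b (Fin.castLE hmn i) k := rfl
      rw [hgoal, this, hvfi]
      have hck : ((σ i)⁻¹ • col i) k = (σ i)⁻¹ * W k i := rfl
      rw [hck]
      field_simp

private noncomputable def stiefelWt {n : ℕ} (σ : Fin n → ℝ) (i : Fin n) (b : Bool) : ℝ :=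
  if b then (1 + σ i) / 2 else (1 - σ i) / 2

private noncomputable def stiefelSg (b : Bool) : ℝ := if b then 1 else -1

private lemma stiefel_wt_sum {n : ℕ} (σ : Fin n → ℝ) :
    ∑ ε : Fin n → Bool, ∏ i, stiefelWt σ i (ε i) = 1 := by
  rw [← Fintype.prod_sum]
  have : ∀ i : Fin n, ∑ b : Bool, stiefelWt σ i b = 1 := by
    intro i; rw [Fintype.sum_bool]; simp [stiefelWt]; ring
  rw [Finset.prod_congr rfl fun i _ => this i, Finset.prod_const_one]

private lemma stiefel_wt_signed_sum {n : ℕ} (σ : Fin n → ℝ) (i : Fin n) :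
    ∑ ε : Fin n → Bool, (∏ j, stiefelWt σ j (ε j)) * stiefelSg (ε i) = σ i := by
  have step : ∀ ε : Fin n → Bool, (∏ j, stiefelWt σ j (ε j)) * stiefelSg (ε i)
      = ∏ j, (stiefelWt σ j (ε j) * (if j = i then stiefelSg (ε j) else 1)) := by
    intro ε
    rw [Finset.prod_mul_distrib]
    congr 1
    rw [Finset.prod_ite_eq' Finset.univ i (fun j => stiefelSg (ε j))]
    simp
  rw [Finset.sum_congr rfl fun ε _ => step ε,
    ← Fintype.prod_sum (fun (j : Fin n) (b : Bool) =>
      stiefelWt σ j b * if j = i then stiefelSg b else 1)]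
  have : ∀ j : Fin n, (∑ b : Bool, stiefelWt σ j b * (if j = i then stiefelSg b else 1))
      = if j = i then σ j else 1 := by
    intro j
    by_cases h : j = i <;> rw [Fintype.sum_bool] <;> simp [h, stiefelWt, stiefelSg] <;> ring
  rw [Finset.prod_congr rfl fun j _ => this j, Finset.prod_ite_eq' Finset.univ i fun j => σ j]
  simp

/-- The convex hull of the Stiefel manifold `{X ∈ ℝ^{m×n} : Xᵀ X = Iₙ}` (for `m ≥ n ≥ 1`)
is the unit spectral-norm ball. -/
theorem convexHull_stiefel_eq_spectralNorm_ball (m n : ℕ) (hn : 1 ≤ n) (hmn : n ≤ m) :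
    convexHull ℝ {X : Matrix (Fin m) (Fin n) ℝ | Xᵀ * X = 1} =
      {X : Matrix (Fin m) (Fin n) ℝ | matSpectralNorm X ≤ 1} := by
  apply le_antisymm
  · exact convexHull_min (fun X hX => stiefel_spectralNorm_le_one X hX) stiefel_ball_convex
  intro X hX
  simp only [Set.mem_setOf_eq] at hX
  classical
  -- spectral data of A = Xᵀ X
  have hA : (Xᵀ * X).IsHermitian := by
    have := Matrix.isHermitian_conjTranspose_mul_self X
    rwa [Matrix.conjTranspose_eq_transpose_of_trivial] at this
  set lam : Fin n → ℝ := hA.eigenvalues with hlamdef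
  have hlam0 : ∀ i, 0 ≤ lam i := by
    intro i
    have hps : (Xᵀ * X).PosSemidef := by
      have := Matrix.posSemidef_conjTranspose_mul_self X
      rwa [Matrix.conjTranspose_eq_transpose_of_trivial] at this
    exact hps.eigenvalues_nonneg i
  have hlam1 : ∀ i, lam i ≤ 1 := by
    intro i
    set v : EuclideanSpace ℝ (Fin n) := hA.eigenvectorBasis i with hv
    have hnv : ‖v‖ = 1 := hA.eigenvectorBasis.orthonormal.1 i
    have h1 : (inner ℝ (Matrix.toEuclideanLin X v) (Matrix.toEuclideanLin X v) : ℝ) = lam i := by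
      rw [stiefel_inner_toEuclideanLin]
      have he : (WithLp.equiv 2 (Fin n → ℝ)) v = ⇑(hA.eigenvectorBasis i) := rfl
      rw [he, hA.mulVec_eigenvectorBasis, dotProduct_smul]
      have : ⇑(hA.eigenvectorBasis i) ⬝ᵥ ⇑(hA.eigenvectorBasis i) = (inner ℝ v v : ℝ) := by
        rw [EuclideanSpace.inner_eq_star_dotProduct]; simp [he]; rfl
      rw [smul_eq_mul, this, real_inner_self_eq_norm_sq, hnv]
      ring
    have h2 : ‖Matrix.toEuclideanLin X v‖ ≤ 1 := by
      have hle := (LinearMap.toContinuousLinearMap (Matrix.toEuclideanLin X)).le_opNorm v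
      simp only [LinearMap.coe_toContinuousLinearMap'] at hle
      calc ‖Matrix.toEuclideanLin X v‖ ≤ matSpectralNorm X * ‖v‖ := hle
        _ ≤ 1 * 1 := by
            refine mul_le_mul hX (le_of_eq hnv) (norm_nonneg _) ?_
            exact le_trans (norm_nonneg _) hX
        _ = 1 := by ring
    rw [real_inner_self_eq_norm_sq] at h1
    calc lam i = ‖Matrix.toEuclideanLin X v‖ ^ 2 := h1.symm
      _ ≤ 1 := by nlinarith [norm_nonneg (Matrix.toEuclideanLin X v)]
  set σ : Fin n → ℝ := fun i => Real.sqrt (lam i) with hσdef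
  have hσ0 : ∀ i, 0 ≤ σ i := fun i => Real.sqrt_nonneg _
  have hσ1 : ∀ i, σ i ≤ 1 := by
    intro i
    rw [hσdef]
    calc Real.sqrt (lam i) ≤ Real.sqrt 1 := Real.sqrt_le_sqrt (hlam1 i)
      _ = 1 := Real.sqrt_one
  set V : Matrix (Fin n) (Fin n) ℝ := (hA.eigenvectorUnitary : Matrix (Fin n) (Fin n) ℝ) with hVdef
  have hVV : Vᵀ * V = 1 := by
    have := (hA.eigenvectorUnitary).2
    rw [Matrix.mem_unitaryGroup_iff'] at this
    rwa [Matrix.star_eq_conjTranspose, Matrix.conjTranspose_eq_transpose_of_trivial] at this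
  have hVVt : V * Vᵀ = 1 := by
    have := (hA.eigenvectorUnitary).2
    rw [Matrix.mem_unitaryGroup_iff] at this
    rwa [Matrix.star_eq_conjTranspose, Matrix.conjTranspose_eq_transpose_of_trivial] at this
  have hdiag : Vᵀ * (Xᵀ * X) * V = Matrix.diagonal lam := by
    have := hA.conjStarAlgAut_star_eigenvectorUnitary
    rw [Unitary.conjStarAlgAut_apply, Unitary.coe_star, star_star, RCLike.ofReal_real_eq_id,
      Function.id_comp, Matrix.star_eq_conjTranspose,
      Matrix.conjTranspose_eq_transpose_of_trivial] at this
    convert this using 2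
  have hW : (X * V)ᵀ * (X * V) = Matrix.diagonal lam := by
    rw [Matrix.transpose_mul]
    calc Vᵀ * Xᵀ * (X * V) = Vᵀ * (Xᵀ * X) * V := by
          rw [Matrix.mul_assoc, Matrix.mul_assoc, Matrix.mul_assoc]
      _ = Matrix.diagonal lam := hdiag
  obtain ⟨U, hUU, hUσ⟩ := stiefel_exists_U hmn (X * V) lam hlam0 hW
  have hXdec : X = U * Matrix.diagonal σ * Vᵀ := by
    rw [hσdef, hUσ, Matrix.mul_assoc, hVVt, Matrix.mul_one]
  -- the convex combination
  set cf : (Fin n → Bool) → ℝ := fun ε => ∏ i, stiefelWt σ i (ε i) with hcfdef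
  set Qm : (Fin n → Bool) → Matrix (Fin m) (Fin n) ℝ :=
    fun ε => U * Matrix.diagonal (fun i => stiefelSg (ε i)) * Vᵀ with hQmdef
  have hcf0 : ∀ ε, 0 ≤ cf ε := by
    intro ε
    refine Finset.prod_nonneg fun i _ => ?_
    rcases ε i with _ | _ <;> simp [stiefelWt] <;> [linarith [hσ1 i]; linarith [hσ0 i]]
  have hcfsum : ∑ ε, cf ε = 1 := stiefel_wt_sum σ
  have hQmem : ∀ ε, Qm ε ∈ {Y : Matrix (Fin m) (Fin n) ℝ | Yᵀ * Y = 1} := by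
    intro ε
    simp only [Set.mem_setOf_eq, hQmdef]
    have hDD : Matrix.diagonal (fun i => stiefelSg (ε i)) *
        Matrix.diagonal (fun i => stiefelSg (ε i)) = 1 := by
      rw [Matrix.diagonal_mul_diagonal]
      convert Matrix.diagonal_one using 2
      ext i
      rcases ε i with _ | _ <;> simp [stiefelSg]
    calc (U * Matrix.diagonal (fun i => stiefelSg (ε i)) * Vᵀ)ᵀ *
          (U * Matrix.diagonal (fun i => stiefelSg (ε i)) * Vᵀ)
        = V * (Matrix.diagonal (fun i => stiefelSg (ε i)) * (Uᵀ * U) *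
            Matrix.diagonal (fun i => stiefelSg (ε i))) * Vᵀ := by
          simp only [Matrix.transpose_mul, Matrix.transpose_transpose,
            Matrix.diagonal_transpose, Matrix.mul_assoc]
      _ = 1 := by
          rw [hUU, Matrix.mul_one, hDD, Matrix.mul_one, hVVt]
  have hDsum : ∑ ε : Fin n → Bool, cf ε • Matrix.diagonal (fun i => stiefelSg (ε i))
      = Matrix.diagonal σ := by
    ext i j
    rw [Matrix.sum_apply]
    by_cases h : i = j
    · subst h
      simp only [Matrix.smul_apply, Matrix.diagonal_apply_eq, smul_eq_mul]
      exact stiefel_wt_signed_sum σ i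
    · simp only [Matrix.smul_apply, Matrix.diagonal_apply_ne _ h, smul_eq_mul, mul_zero]
      rw [Finset.sum_const_zero]
  have hfinal : ∑ ε : Fin n → Bool, cf ε • Qm ε = X := by
    have h1 : ∀ ε : Fin n → Bool, cf ε • Qm ε
        = U * (cf ε • Matrix.diagonal (fun i => stiefelSg (ε i))) * Vᵀ := by
      intro ε
      rw [hQmdef]
      simp only [Matrix.mul_smul, Matrix.smul_mul]
    rw [Finset.sum_congr rfl fun ε _ => h1 ε]
    rw [← Matrix.sum_mul, ← Matrix.mul_sum, hDsum, ← hXdec]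
  rw [← hfinal]
  exact (convex_convexHull ℝ _).sum_mem (fun ε _ => hcf0 ε) hcfsum
    (fun ε _ => subset_convexHull ℝ _ (hQmem ε))
end

section
/- Let A ∈ ℝ^{m×n}, λ > 0, and suppose A = U Σ Vᵀ is a singular value decomposition of A, where U ∈ ℝ^{m×m} and V ∈ ℝ^{n×n} are orthogonal matrices and Σ ∈ ℝ^{m×n} is a rectangular diagonal matrix whose diagonal entries form the nonnegative vector σ_A ∈ ℝ^{min(m,n)}. Let d = σ_A − λ·P_{ℓ1}(σ_A/λ) and let D ∈ ℝ^{m×n} be the rectangular diagonal matrix with diagonal d. Then X* = U D Vᵀ is the unique minimizer over X ∈ ℝ^{m×n} of the function (1/2)‖A − X‖_F² + λ‖X‖₂. -/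
open Matrix

/-- The Frobenius norm of a real matrix. -/
noncomputable def frobNorm {m n : ℕ} (A : Matrix (Fin m) (Fin n) ℝ) : ℝ :=
  Real.sqrt (∑ i, ∑ j, (A i j) ^ 2)

/-- The `m × n` rectangular diagonal matrix with diagonal vector `d ∈ ℝ^{min(m,n)}`. -/
def rectDiag {m n : ℕ} (d : Fin (min m n) → ℝ) : Matrix (Fin m) (Fin n) ℝ :=
  fun i j =>
    if h : (i : ℕ) = (j : ℕ) then
      d ⟨(i : ℕ), by have h1 := i.isLt; have h2 := j.isLt; omega⟩
    else 0

theorem rectDiag_apply_eq {m n : ℕ} (c : Fin (min m n) → ℝ) (i : Fin m) (j : Fin n)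
    (h : (i : ℕ) = (j : ℕ)) :
    rectDiag c i j = c ⟨(i : ℕ), by have h1 := i.isLt; have h2 := j.isLt; omega⟩ := by
  unfold rectDiag
  rw [dif_pos h]

theorem rectDiag_apply_ne {m n : ℕ} (c : Fin (min m n) → ℝ) (i : Fin m) (j : Fin n)
    (h : (i : ℕ) ≠ (j : ℕ)) : rectDiag c i j = 0 := by
  unfold rectDiag
  rw [dif_neg h]

theorem reindex_min (m n : ℕ) (f : ℕ → ℝ) :
    ∑ i : Fin m, (if (i:ℕ) < n then f i else 0) = ∑ k : Fin (min m n), f k := by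
  rw [Fin.sum_univ_eq_sum_range (fun i => if i < n then f i else 0),
    Fin.sum_univ_eq_sum_range (fun i => f i), ← Finset.sum_filter]
  congr 1
  ext x
  simp only [Finset.mem_filter, Finset.mem_range]
  omega

def diagAux {m n : ℕ} (c : Fin (min m n) → ℝ) (M : Matrix (Fin m) (Fin n) ℝ) (t : ℕ) : ℝ :=
  if h : t < min m n then
    c ⟨t, h⟩ * M (Fin.castLE (Nat.min_le_left m n) ⟨t, h⟩) (Fin.castLE (Nat.min_le_right m n) ⟨t, h⟩)
  else 0

theorem diagAux_pos {m n : ℕ} (c : Fin (min m n) → ℝ) (M : Matrix (Fin m) (Fin n) ℝ)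
    (t : ℕ) (h : t < min m n) :
    diagAux c M t
      = c ⟨t, h⟩ * M (Fin.castLE (Nat.min_le_left m n) ⟨t, h⟩)
          (Fin.castLE (Nat.min_le_right m n) ⟨t, h⟩) := by
  unfold diagAux
  rw [dif_pos h]

theorem sum_rectDiag_mul {m n : ℕ} (c : Fin (min m n) → ℝ) (M : Matrix (Fin m) (Fin n) ℝ) :
    ∑ i, ∑ j, rectDiag c i j * M i j
      = ∑ k, c k * M (Fin.castLE (Nat.min_le_left m n) k) (Fin.castLE (Nat.min_le_right m n) k) := by
  have h1 : ∀ i : Fin m, ∑ j, rectDiag c i j * M i j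
      = (if (i:ℕ) < n then diagAux c M i else 0) := by
    intro i
    by_cases h : (i:ℕ) < n
    · rw [if_pos h, Finset.sum_eq_single (⟨(i:ℕ), h⟩ : Fin n)]
      · have hmin : (i:ℕ) < min m n := by have := i.isLt; omega
        rw [rectDiag_apply_eq c _ _ rfl, diagAux_pos c M _ hmin]
        rfl
      · intro b _ hb
        have : (i:ℕ) ≠ (b:ℕ) := fun hc => hb (Fin.ext hc.symm)
        rw [rectDiag_apply_ne c _ _ this, zero_mul]
      · simp
    · rw [if_neg h]
      apply Finset.sum_eq_zero
      intro j _
      have : (i:ℕ) ≠ (j:ℕ) := by have := j.isLt; omega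
      rw [rectDiag_apply_ne c _ _ this, zero_mul]
  rw [Finset.sum_congr rfl (fun i _ => h1 i), reindex_min]
  apply Finset.sum_congr rfl
  intro k _
  rw [diagAux_pos c M _ k.isLt]

theorem finner_eq_trace {m n : ℕ} (Y X : Matrix (Fin m) (Fin n) ℝ) :
    ∑ i, ∑ j, Y i j * X i j = Matrix.trace (Yᵀ * X) := by
  simp only [Matrix.trace, Matrix.diag, Matrix.mul_apply, Matrix.transpose_apply]
  exact Finset.sum_comm

theorem inner_UDV {m n : ℕ} (U : Matrix (Fin m) (Fin m) ℝ) (V : Matrix (Fin n) (Fin n) ℝ)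
    (C : Matrix (Fin m) (Fin n) ℝ) (X : Matrix (Fin m) (Fin n) ℝ) :
    ∑ i, ∑ j, (U * C * Vᵀ) i j * X i j = ∑ a, ∑ b, C a b * (Uᵀ * X * V) a b := by
  rw [finner_eq_trace, finner_eq_trace]
  rw [Matrix.transpose_mul, Matrix.transpose_mul, Matrix.transpose_transpose]
  rw [Matrix.mul_assoc V, Matrix.trace_mul_comm V, Matrix.mul_assoc (Cᵀ * Uᵀ) X V,
    Matrix.mul_assoc Cᵀ Uᵀ (X * V), ← Matrix.mul_assoc Uᵀ X V]

theorem sumsq_mulVec {m' : ℕ} (U : Matrix (Fin m') (Fin m') ℝ) (hU : Uᵀ * U = 1)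
    (z : Fin m' → ℝ) : ∑ i, (U.mulVec z i) ^ 2 = ∑ i, z i ^ 2 := by
  have h1 : ∀ w : Fin m' → ℝ, ∑ i, w i ^ 2 = w ⬝ᵥ w := by
    intro w; simp [dotProduct, sq]
  rw [h1, h1, Matrix.dotProduct_mulVec, Matrix.vecMul_mulVec, hU, Matrix.vecMul_one]

theorem rectDiag_mulVec {m n : ℕ} (d : Fin (min m n) → ℝ) (z : Fin n → ℝ) (i : Fin m) :
    (rectDiag d).mulVec z i
      = if h : (i:ℕ) < min m n then d ⟨(i:ℕ), h⟩ * z ⟨(i:ℕ), by omega⟩ else 0 := by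
  show ∑ j, rectDiag d i j * z j = _
  by_cases h : (i:ℕ) < n
  · have hmin : (i:ℕ) < min m n := by have := i.isLt; omega
    rw [dif_pos hmin, Finset.sum_eq_single (⟨(i:ℕ), h⟩ : Fin n)]
    · rw [rectDiag_apply_eq d _ _ rfl]
    · intro b _ hb
      have : (i:ℕ) ≠ (b:ℕ) := fun hc => hb (Fin.ext hc.symm)
      rw [rectDiag_apply_ne d _ _ this, zero_mul]
    · simp
  · have hmin : ¬ (i:ℕ) < min m n := by omega
    rw [dif_neg hmin]
    apply Finset.sum_eq_zero
    intro j _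
    have : (i:ℕ) ≠ (j:ℕ) := by have := j.isLt; omega
    rw [rectDiag_apply_ne d _ _ this, zero_mul]

theorem sum_fin_le_sum_fin {N n : ℕ} (h : N ≤ n) (f : ℕ → ℝ) (hf : ∀ t, 0 ≤ f t) :
    ∑ k : Fin N, f k ≤ ∑ j : Fin n, f j := by
  rw [Fin.sum_univ_eq_sum_range (fun i => f i), Fin.sum_univ_eq_sum_range (fun i => f i)]
  exact Finset.sum_le_sum_of_subset_of_nonneg
    (Finset.range_subset_range.mpr h) (fun t _ _ => hf t)

theorem sumsq_rectDiag_mulVec {m n : ℕ} (d : Fin (min m n) → ℝ) (c : ℝ)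
    (hd : ∀ k, |d k| ≤ c) (z : Fin n → ℝ) :
    ∑ i, ((rectDiag d).mulVec z i) ^ 2 ≤ c ^ 2 * ∑ j, z j ^ 2 := by
  set g : ℕ → ℝ := fun t => if ht : t < n then z ⟨t, ht⟩ ^ 2 else 0 with hg
  have hgnn : ∀ t, 0 ≤ g t := by
    intro t
    rw [hg]
    by_cases ht : t < n
    · simp only [dif_pos ht]; positivity
    · simp only [dif_neg ht]; exact le_refl 0
  have step1 : ∀ i : Fin m, ((rectDiag d).mulVec z i) ^ 2
      ≤ (if (i:ℕ) < n then (fun t => c ^ 2 * g t) i else 0) := by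
    intro i
    rw [rectDiag_mulVec]
    by_cases h : (i:ℕ) < n
    · have hmin : (i:ℕ) < min m n := by have := i.isLt; omega
      rw [dif_pos hmin, if_pos h]
      simp only
      rw [hg]
      simp only [dif_pos h]
      have h1 : (d ⟨(i:ℕ), hmin⟩ * z ⟨(i:ℕ), by omega⟩) ^ 2
          = d ⟨(i:ℕ), hmin⟩ ^ 2 * z ⟨(i:ℕ), h⟩ ^ 2 := by ring
      rw [h1]
      have h2 : d ⟨(i:ℕ), hmin⟩ ^ 2 ≤ c ^ 2 := by
        have := hd ⟨(i:ℕ), hmin⟩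
        have h3 := abs_nonneg (d ⟨(i:ℕ), hmin⟩)
        nlinarith [sq_abs (d ⟨(i:ℕ), hmin⟩)]
      nlinarith [sq_nonneg (z ⟨(i:ℕ), h⟩)]
    · have hmin : ¬ (i:ℕ) < min m n := by omega
      rw [dif_neg hmin, if_neg h]
      norm_num
  calc ∑ i, ((rectDiag d).mulVec z i) ^ 2
      ≤ ∑ i : Fin m, (if (i:ℕ) < n then (fun t => c ^ 2 * g t) i else 0) :=
        Finset.sum_le_sum (fun i _ => step1 i)
    _ = ∑ k : Fin (min m n), c ^ 2 * g k := reindex_min m n (fun t => c ^ 2 * g t)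
    _ = c ^ 2 * ∑ k : Fin (min m n), g k := by rw [Finset.mul_sum]
    _ ≤ c ^ 2 * ∑ j : Fin n, g j := by
        apply mul_le_mul_of_nonneg_left _ (sq_nonneg c)
        exact sum_fin_le_sum_fin (Nat.min_le_right m n) g hgnn
    _ = c ^ 2 * ∑ j : Fin n, z j ^ 2 := by
        congr 1
        apply Finset.sum_congr rfl
        intro j _
        rw [hg]
        simp only [dif_pos j.isLt]

theorem euclid_norm {k : ℕ} (v : EuclideanSpace ℝ (Fin k)) :
    ‖v‖ = Real.sqrt (∑ i, v i ^ 2) := by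
  rw [EuclideanSpace.norm_eq]
  congr 1
  apply Finset.sum_congr rfl
  intro i _
  rw [Real.norm_eq_abs, sq_abs]

theorem spectralNorm_le_of {m n : ℕ} (U : Matrix (Fin m) (Fin m) ℝ)
    (V : Matrix (Fin n) (Fin n) ℝ) (hU : Uᵀ * U = 1) (hV : Vᵀ * V = 1)
    (d : Fin (min m n) → ℝ) (c : ℝ) (hc : 0 ≤ c) (hd : ∀ k, |d k| ≤ c) :
    matSpectralNorm (U * rectDiag d * Vᵀ) ≤ c := by
  apply ContinuousLinearMap.opNorm_le_bound _ hc
  intro x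
  rw [LinearMap.coe_toContinuousLinearMap']
  show ‖(WithLp.equiv 2 (Fin m → ℝ)).symm ((U * rectDiag d * Vᵀ) *ᵥ (WithLp.equiv 2 (Fin n → ℝ)) x)‖ ≤ c * ‖x‖
  set y : Fin n → ℝ := (WithLp.equiv 2 (Fin n → ℝ)) x with hy
  have hnx : ‖x‖ = Real.sqrt (∑ j, y j ^ 2) := by
    rw [euclid_norm x]
    rfl
  have hT : ‖(WithLp.equiv 2 (Fin m → ℝ)).symm ((U * rectDiag d * Vᵀ) *ᵥ y)‖
      = Real.sqrt (∑ i, ((U * rectDiag d * Vᵀ) *ᵥ y) i ^ 2) := by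
    rw [euclid_norm]
    rfl
  rw [hT, hnx]
  have hVVt : V * Vᵀ = 1 := mul_eq_one_comm.mp hV
  have hVt : (Vᵀ)ᵀ * Vᵀ = 1 := by rw [Matrix.transpose_transpose]; exact hVVt
  have hmv : (U * rectDiag d * Vᵀ) *ᵥ y = U *ᵥ ((rectDiag d) *ᵥ (Vᵀ *ᵥ y)) := by
    rw [Matrix.mulVec_mulVec, Matrix.mulVec_mulVec]
  rw [hmv, sumsq_mulVec U hU]
  have h2 : ∑ i, ((rectDiag d) *ᵥ (Vᵀ *ᵥ y)) i ^ 2 ≤ c ^ 2 * ∑ j, (Vᵀ *ᵥ y) j ^ 2 :=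
    sumsq_rectDiag_mulVec d c hd _
  rw [sumsq_mulVec Vᵀ hVt y] at h2
  calc Real.sqrt (∑ i, ((rectDiag d) *ᵥ (Vᵀ *ᵥ y)) i ^ 2)
      ≤ Real.sqrt (c ^ 2 * ∑ j, y j ^ 2) := Real.sqrt_le_sqrt h2
    _ = c * Real.sqrt (∑ j, y j ^ 2) := by
        rw [Real.sqrt_mul (sq_nonneg c), Real.sqrt_sq hc]

theorem entry_abs_le {m n : ℕ} (U : Matrix (Fin m) (Fin m) ℝ)
    (V : Matrix (Fin n) (Fin n) ℝ) (hU : Uᵀ * U = 1) (hV : Vᵀ * V = 1)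
    (X : Matrix (Fin m) (Fin n) ℝ) (a : Fin m) (b : Fin n) :
    |(Uᵀ * X * V) a b| ≤ matSpectralNorm X := by
  set u : Fin m → ℝ := fun i => U i a with hu
  set v : Fin n → ℝ := fun j => V j b with hv
  have hentry : (Uᵀ * X * V) a b = u ⬝ᵥ (X *ᵥ v) := by
    simp only [Matrix.mul_apply, dotProduct, Matrix.mulVec, Matrix.transpose_apply,
      Finset.sum_mul, Finset.mul_sum]
    rw [Finset.sum_comm]
    apply Finset.sum_congr rfl
    intro i _
    apply Finset.sum_congr rfl
    intro j _
    ring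
  set ue : EuclideanSpace ℝ (Fin m) := (WithLp.equiv 2 (Fin m → ℝ)).symm u
  set ve : EuclideanSpace ℝ (Fin n) := (WithLp.equiv 2 (Fin n → ℝ)).symm v
  have hinner : u ⬝ᵥ (X *ᵥ v) = inner ℝ ue ((Matrix.toEuclideanLin X) ve) := by
    rw [Matrix.toEuclideanLin_apply_piLp_toLp]
    simp [dotProduct, PiLp.inner_apply, ue, WithLp.equiv_symm_apply]
    exact Finset.sum_congr rfl (fun i _ => mul_comm _ _)
  have hnu : ‖ue‖ = 1 := by
    rw [euclid_norm]
    have : ∑ i, ue i ^ 2 = (Uᵀ * U) a a := by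
      simp [Matrix.mul_apply, ue, u, WithLp.equiv_symm_apply, sq]
    rw [this, hU]
    simp
  have hnv : ‖ve‖ = 1 := by
    rw [euclid_norm]
    have : ∑ j, ve j ^ 2 = (Vᵀ * V) b b := by
      simp [Matrix.mul_apply, ve, v, WithLp.equiv_symm_apply, sq]
    rw [this, hV]
    simp
  rw [hentry, hinner]
  calc |inner ℝ ue ((Matrix.toEuclideanLin X) ve)|
      ≤ ‖ue‖ * ‖(Matrix.toEuclideanLin X) ve‖ := abs_real_inner_le_norm _ _
    _ = ‖(LinearMap.toContinuousLinearMap (Matrix.toEuclideanLin X)) ve‖ := by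
        rw [hnu, one_mul]; rfl
    _ ≤ matSpectralNorm X * ‖ve‖ := ContinuousLinearMap.le_opNorm _ _
    _ = matSpectralNorm X := by rw [hnv, mul_one]

theorem proj_opt {N : ℕ} (w p : Fin N → ℝ) (hp_mem : ∑ i, |p i| ≤ 1)
    (hp_proj : ∀ q : Fin N → ℝ, ∑ i, |q i| ≤ 1 →
      ∑ i, (w i) ^ 2 ≤ ∑ i, (w i + p i - q i) ^ 2)
    (q : Fin N → ℝ) (hq : ∑ i, |q i| ≤ 1) :
    ∑ i, w i * q i ≤ ∑ i, w i * p i := by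
  by_contra hlt
  push_neg at hlt
  set cdot : ℝ := ∑ i, w i * (q i - p i) with hcdot
  have hcpos : 0 < cdot := by
    have : cdot = ∑ i, w i * q i - ∑ i, w i * p i := by
      rw [hcdot, ← Finset.sum_sub_distrib]
      apply Finset.sum_congr rfl
      intro i _
      ring
    rw [this]
    linarith
  set s : ℝ := ∑ i, (q i - p i) ^ 2 with hs
  have hsnn : 0 ≤ s := Finset.sum_nonneg (fun i _ => sq_nonneg _)
  have key : ∀ t : ℝ, 0 ≤ t → t ≤ 1 → 2 * t * cdot ≤ t ^ 2 * s := by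
    intro t ht ht1
    have hqt : ∑ i, |p i + t * (q i - p i)| ≤ 1 := by
      calc ∑ i, |p i + t * (q i - p i)|
          ≤ ∑ i, ((1 - t) * |p i| + t * |q i|) := by
            apply Finset.sum_le_sum
            intro i _
            have h1 : p i + t * (q i - p i) = (1 - t) * p i + t * q i := by ring
            rw [h1]
            calc |(1 - t) * p i + t * q i| ≤ |(1 - t) * p i| + |t * q i| := abs_add_le _ _
              _ = (1 - t) * |p i| + t * |q i| := by
                  rw [abs_mul, abs_mul, abs_of_nonneg (by linarith : (0:ℝ) ≤ 1 - t),
                    abs_of_nonneg ht]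
        _ = (1 - t) * ∑ i, |p i| + t * ∑ i, |q i| := by
            rw [Finset.sum_add_distrib, Finset.mul_sum, Finset.mul_sum]
        _ ≤ 1 := by nlinarith
    have h2 := hp_proj (fun i => p i + t * (q i - p i)) hqt
    have h3 : ∑ i, (w i + p i - (p i + t * (q i - p i))) ^ 2
        = ∑ i, (w i) ^ 2 - 2 * t * cdot + t ^ 2 * s := by
      rw [hcdot, hs, Finset.mul_sum, Finset.mul_sum, ← Finset.sum_sub_distrib,
        ← Finset.sum_add_distrib]
      apply Finset.sum_congr rfl
      intro i _
      ring
    rw [h3] at h2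
    linarith
  have h1 := key 1 zero_le_one le_rfl
  have hspos : 0 < s := by nlinarith
  have h2 := key (cdot / s) (by positivity) (by rw [div_le_one hspos]; nlinarith)
  rw [div_pow] at h2
  have h3 : (cdot / s) * cdot = cdot ^ 2 / s := by ring
  have h4 : cdot ^ 2 / s ^ 2 * s = cdot ^ 2 / s := by
    field_simp
  rw [h4] at h2
  nlinarith [sq_nonneg cdot, div_pos (by positivity : (0:ℝ) < cdot ^ 2) hspos]

theorem proj_sign {N : ℕ} (w p : Fin N → ℝ) (hp_mem : ∑ i, |p i| ≤ 1)
    (hp_proj : ∀ q : Fin N → ℝ, ∑ i, |q i| ≤ 1 →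
      ∑ i, (w i) ^ 2 ≤ ∑ i, (w i + p i - q i) ^ 2)
    (k : Fin N) : |w k| ≤ ∑ i, w i * p i := by
  set q : Fin N → ℝ := fun i => if i = k then (if 0 ≤ w k then 1 else -1) else 0 with hqd
  have hq : ∑ i, |q i| ≤ 1 := by
    have : ∀ i, |q i| = if i = k then 1 else 0 := by
      intro i
      by_cases h : i = k
      · simp only [hqd, if_pos h]
        split_ifs <;> norm_num
      · simp [hqd, if_neg h]
    rw [Finset.sum_congr rfl (fun i _ => this i)]
    simp
  have h1 := proj_opt w p hp_mem hp_proj q hq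
  have h2 : ∑ i, w i * q i = |w k| := by
    have : ∀ i, w i * q i = if i = k then |w k| else 0 := by
      intro i
      by_cases h : i = k
      · subst h
        by_cases hw : 0 ≤ w i
        · simp only [hqd, if_pos rfl, if_pos hw, abs_of_nonneg hw, mul_one, if_true]
        · simp only [hqd, if_pos rfl, if_neg hw, abs_of_neg (by linarith : w i < 0), mul_neg_one, if_true]
      · simp [hqd, if_neg h]
    rw [Finset.sum_congr rfl (fun i _ => this i)]
    simp
  linarith

/-- Let `A = U Σ Vᵀ` be an SVD of `A ∈ ℝ^{m×n}` with singular-value vector `σ`, let `λ > 0`,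
and let `p` be the Euclidean projection of `σ/λ` onto the unit `ℓ₁` ball. Then
`X* = U diag(σ - λ p) Vᵀ` is the unique minimizer of `X ↦ (1/2)‖A - X‖_F² + λ‖X‖₂`. -/
theorem prox_spectralNorm (m n : ℕ) (A : Matrix (Fin m) (Fin n) ℝ) (lam : ℝ) (hlam : 0 < lam)
    (U : Matrix (Fin m) (Fin m) ℝ) (V : Matrix (Fin n) (Fin n) ℝ)
    (hU : Uᵀ * U = 1) (hV : Vᵀ * V = 1)
    (σ : Fin (min m n) → ℝ) (hσ : ∀ i, 0 ≤ σ i)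
    (hA : A = U * rectDiag σ * Vᵀ)
    (p : Fin (min m n) → ℝ)
    (hp_mem : ∑ i, |p i| ≤ 1)
    (hp_proj : ∀ q : Fin (min m n) → ℝ, ∑ i, |q i| ≤ 1 →
      ∑ i, (σ i / lam - p i) ^ 2 ≤ ∑ i, (σ i / lam - q i) ^ 2) :
    ∀ X : Matrix (Fin m) (Fin n) ℝ,
      X ≠ U * rectDiag (fun i => σ i - lam * p i) * Vᵀ →
      (1 / 2) * frobNorm (A - U * rectDiag (fun i => σ i - lam * p i) * Vᵀ) ^ 2
          + lam * matSpectralNorm (U * rectDiag (fun i => σ i - lam * p i) * Vᵀ)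
        < (1 / 2) * frobNorm (A - X) ^ 2 + lam * matSpectralNorm X := by
  intro X hX
  rcases Nat.eq_zero_or_pos (min m n) with h0 | hpos
  · exfalso
    apply hX
    have hmn : m = 0 ∨ n = 0 := by omega
    rcases hmn with hm | hn
    · subst hm; funext i j; exact i.elim0
    · subst hn; funext i j; exact j.elim0
  set dv : Fin (min m n) → ℝ := fun i => σ i - lam * p i with hdv
  set Xs : Matrix (Fin m) (Fin n) ℝ := U * rectDiag dv * Vᵀ with hXs
  set w : Fin (min m n) → ℝ := fun i => σ i / lam - p i with hw
  have hproj' : ∀ q : Fin (min m n) → ℝ, ∑ i, |q i| ≤ 1 →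
      ∑ i, (w i) ^ 2 ≤ ∑ i, (w i + p i - q i) ^ 2 := by
    intro q hq
    calc ∑ i, (w i) ^ 2 = ∑ i, (σ i / lam - p i) ^ 2 := rfl
      _ ≤ ∑ i, (σ i / lam - q i) ^ 2 := hp_proj q hq
      _ = ∑ i, (w i + p i - q i) ^ 2 := by
          apply Finset.sum_congr rfl
          intro i _
          have : w i + p i - q i = σ i / lam - q i := by rw [hw]; ring
          rw [this]
  set Spw : ℝ := ∑ i, w i * p i with hSpw
  have hSk : ∀ k, |w k| ≤ Spw := fun k => proj_sign w p hp_mem hproj' k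
  have hSnn : 0 ≤ Spw := le_trans (abs_nonneg _) (hSk ⟨0, hpos⟩)
  have hd_eq : ∀ k, dv k = lam * w k := by
    intro k
    show σ k - lam * p k = lam * (σ k / lam - p k)
    field_simp
  -- A - Xs = U * rectDiag (lam • p) * Vᵀ
  have hDsub : rectDiag σ - rectDiag dv = rectDiag (fun i => lam * p i) := by
    ext i j
    by_cases h : (i : ℕ) = (j : ℕ)
    · rw [Matrix.sub_apply, rectDiag_apply_eq σ i j h, rectDiag_apply_eq dv i j h,
        rectDiag_apply_eq (fun i => lam * p i) i j h]
      show σ _ - (σ _ - lam * p _) = lam * p _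
      ring
    · rw [Matrix.sub_apply, rectDiag_apply_ne σ i j h, rectDiag_apply_ne dv i j h,
        rectDiag_apply_ne (fun i => lam * p i) i j h, sub_zero]
  have hG : A - Xs = U * rectDiag (fun i => lam * p i) * Vᵀ := by
    calc A - Xs = U * (rectDiag σ - rectDiag dv) * Vᵀ := by
          rw [hA, hXs, Matrix.mul_sub, Matrix.sub_mul]
      _ = U * rectDiag (fun i => lam * p i) * Vᵀ := by rw [hDsub]
  have hdiagX : ∀ c : Fin (min m n) → ℝ, Uᵀ * (U * rectDiag c * Vᵀ) * V = rectDiag c := by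
    intro c
    simp only [← Matrix.mul_assoc]
    rw [hU, Matrix.one_mul, Matrix.mul_assoc, hV, Matrix.mul_one]
  -- key sums
  have E1 : ∑ i, ∑ j, (A - Xs) i j * X i j
      = ∑ k, lam * p k * (Uᵀ * X * V) (Fin.castLE (Nat.min_le_left m n) k)
          (Fin.castLE (Nat.min_le_right m n) k) := by
    rw [hG, inner_UDV, sum_rectDiag_mul]
  have E2 : ∑ i, ∑ j, (A - Xs) i j * Xs i j = ∑ k, lam * p k * dv k := by
    rw [hG, inner_UDV, hXs, hdiagX dv, sum_rectDiag_mul]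
    apply Finset.sum_congr rfl
    intro k _
    rw [rectDiag_apply_eq dv _ _ rfl]
    rfl
  have E3 : ∑ i, ∑ j, (A - Xs) i j ^ 2 = ∑ k, (lam * p k) ^ 2 := by
    have h1 : ∑ i, ∑ j, (A - Xs) i j ^ 2 = ∑ i, ∑ j, (A - Xs) i j * (A - Xs) i j := by
      apply Finset.sum_congr rfl
      intro i _
      apply Finset.sum_congr rfl
      intro j _
      rw [sq]
    rw [h1]
    nth_rewrite 1 [hG]
    rw [inner_UDV, hG, hdiagX (fun i => lam * p i), sum_rectDiag_mul]
    apply Finset.sum_congr rfl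
    intro k _
    rw [rectDiag_apply_eq (fun i => lam * p i) _ _ rfl, sq]
    rfl
  have hfrs : ∀ Y : Matrix (Fin m) (Fin n) ℝ, frobNorm Y ^ 2 = ∑ i, ∑ j, Y i j ^ 2 := by
    intro Y
    unfold frobNorm
    rw [Real.sq_sqrt]
    positivity
  have hexp : ∑ i, ∑ j, (A - X) i j ^ 2
      = ∑ i, ∑ j, (A - Xs) i j ^ 2
        + 2 * (∑ i, ∑ j, (A - Xs) i j * Xs i j - ∑ i, ∑ j, (A - Xs) i j * X i j)
        + ∑ i, ∑ j, (Xs - X) i j ^ 2 := by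
    have h1 : ∀ (i : Fin m) (j : Fin n), (A - X) i j ^ 2
        = (A - Xs) i j ^ 2 + 2 * ((A - Xs) i j * Xs i j - (A - Xs) i j * X i j)
          + (Xs - X) i j ^ 2 := by
      intro i j
      simp only [Matrix.sub_apply]
      ring
    have h2 : ∀ i : Fin m, ∑ j, (A - X) i j ^ 2
        = ∑ j, (A - Xs) i j ^ 2
          + 2 * (∑ j, (A - Xs) i j * Xs i j - ∑ j, (A - Xs) i j * X i j)
          + ∑ j, (Xs - X) i j ^ 2 := by
      intro i
      rw [Finset.sum_congr rfl (fun j _ => h1 i j), Finset.sum_add_distrib,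
        Finset.sum_add_distrib, ← Finset.mul_sum, Finset.sum_sub_distrib]
    rw [Finset.sum_congr rfl (fun i _ => h2 i), Finset.sum_add_distrib,
      Finset.sum_add_distrib, ← Finset.mul_sum, Finset.sum_sub_distrib]
  have hsXnn : 0 ≤ matSpectralNorm X := norm_nonneg _
  have I1 : ∑ k, lam * p k * (Uᵀ * X * V) (Fin.castLE (Nat.min_le_left m n) k)
      (Fin.castLE (Nat.min_le_right m n) k) ≤ lam * matSpectralNorm X := by
    calc ∑ k, lam * p k * (Uᵀ * X * V) (Fin.castLE (Nat.min_le_left m n) k)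
          (Fin.castLE (Nat.min_le_right m n) k)
        ≤ ∑ k, lam * matSpectralNorm X * |p k| := by
          apply Finset.sum_le_sum
          intro k _
          have hb := entry_abs_le U V hU hV X (Fin.castLE (Nat.min_le_left m n) k)
            (Fin.castLE (Nat.min_le_right m n) k)
          have h1 : p k * (Uᵀ * X * V) (Fin.castLE (Nat.min_le_left m n) k)
              (Fin.castLE (Nat.min_le_right m n) k) ≤ |p k| * matSpectralNorm X := by
            calc p k * (Uᵀ * X * V) _ _ ≤ |p k * (Uᵀ * X * V) _ _| := le_abs_self _
              _ = |p k| * |(Uᵀ * X * V) _ _| := abs_mul _ _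
              _ ≤ |p k| * matSpectralNorm X := mul_le_mul_of_nonneg_left hb (abs_nonneg _)
          calc lam * p k * (Uᵀ * X * V) _ _
              = lam * (p k * (Uᵀ * X * V) _ _) := by ring
            _ ≤ lam * (|p k| * matSpectralNorm X) := by
                exact mul_le_mul_of_nonneg_left h1 hlam.le
            _ = lam * matSpectralNorm X * |p k| := by ring
      _ = lam * matSpectralNorm X * ∑ k, |p k| := by rw [← Finset.mul_sum]
      _ ≤ lam * matSpectralNorm X * 1 :=
          mul_le_mul_of_nonneg_left hp_mem (mul_nonneg hlam.le hsXnn)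
      _ = lam * matSpectralNorm X := mul_one _
  have hXs_le : matSpectralNorm Xs ≤ lam * Spw := by
    rw [hXs]
    apply spectralNorm_le_of U V hU hV dv (lam * Spw) (mul_nonneg hlam.le hSnn)
    intro k
    rw [hd_eq k, abs_mul, abs_of_pos hlam]
    exact mul_le_mul_of_nonneg_left (hSk k) hlam.le
  have hsum2 : ∑ k, lam * p k * dv k = lam * (lam * Spw) := by
    calc ∑ k, lam * p k * dv k = ∑ k, lam * lam * (w k * p k) := by
          apply Finset.sum_congr rfl
          intro k _
          rw [hd_eq k]
          ring
      _ = lam * lam * Spw := by rw [← Finset.mul_sum, hSpw]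
      _ = lam * (lam * Spw) := by ring
  have I2 : lam * matSpectralNorm Xs ≤ ∑ k, lam * p k * dv k := by
    rw [hsum2]
    exact mul_le_mul_of_nonneg_left hXs_le hlam.le
  have I3 : 0 < ∑ i, ∑ j, (Xs - X) i j ^ 2 := by
    have hne : ∃ i j, (Xs - X) i j ≠ 0 := by
      by_contra hc
      push_neg at hc
      apply hX
      funext i j
      have := hc i j
      rw [Matrix.sub_apply, sub_eq_zero] at this
      exact this.symm
    obtain ⟨i0, j0, hij⟩ := hne
    have hrow : 0 < ∑ j, (Xs - X) i0 j ^ 2 :=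
      Finset.sum_pos' (fun j _ => sq_nonneg _)
        ⟨j0, Finset.mem_univ _, lt_of_le_of_ne (sq_nonneg _) (Ne.symm (pow_ne_zero 2 hij))⟩
    exact Finset.sum_pos' (fun i _ => Finset.sum_nonneg fun j _ => sq_nonneg _)
      ⟨i0, Finset.mem_univ _, hrow⟩
  rw [hfrs (A - Xs), hfrs (A - X), hexp]
  linarith [I1, I2, I3, E1, E2]
end

section
/- Let a ∈ ℝⁿ and λ > 0. The unique minimizer over x ∈ ℝⁿ of the function (1/2)‖a − x‖₂² + λ‖x‖_∞ is x* = a − λ·P_{ℓ1}(a/λ), where ‖x‖_∞ = maxᵢ |xᵢ| and ‖·‖₂ is the Euclidean norm. -/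
/-- The `ℓ∞` norm of a vector in `ℝⁿ`, `‖x‖_∞ = maxᵢ |xᵢ|`. -/
noncomputable def linftyNorm {n : ℕ} (x : Fin n → ℝ) : ℝ :=
  sSup (Set.range fun i => |x i|)

/-- For `a ∈ ℝⁿ` and `λ > 0`, the unique minimizer of `x ↦ (1/2)‖a - x‖₂² + λ‖x‖_∞` is
`x* = a - λ · P_{ℓ₁}(a/λ)`, where `P_{ℓ₁}` is the Euclidean projection onto the unit
`ℓ₁`-norm ball. -/
theorem prox_linftyNorm (n : ℕ) (a : Fin n → ℝ) (lam : ℝ) (hlam : 0 < lam)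
    (p : Fin n → ℝ)
    (hp_mem : ∑ i, |p i| ≤ 1)
    (hp_proj : ∀ q : Fin n → ℝ, ∑ i, |q i| ≤ 1 →
      ∑ i, (a i / lam - p i) ^ 2 ≤ ∑ i, (a i / lam - q i) ^ 2) :
    ∀ x : Fin n → ℝ, x ≠ (fun i => a i - lam * p i) →
      (1 / 2) * (∑ i, (a i - (a i - lam * p i)) ^ 2)
          + lam * linftyNorm (fun i => a i - lam * p i)
        < (1 / 2) * (∑ i, (a i - x i) ^ 2) + lam * linftyNorm x := by
  intro x hx
  set b : Fin n → ℝ := fun i => a i / lam with hb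
  -- variational inequality for the projection
  have hvar : ∀ q : Fin n → ℝ, (∑ i, |q i| ≤ 1) →
      ∑ i, (b i - p i) * (q i - p i) ≤ 0 := by
    intro q hq
    set S := ∑ i, (b i - p i) * (q i - p i) with hS
    set K := ∑ i, (q i - p i) ^ 2 with hK
    have hK0 : 0 ≤ K := Finset.sum_nonneg fun i _ => sq_nonneg _
    have key : ∀ t : ℝ, 0 < t → t ≤ 1 → 2 * t * S ≤ t ^ 2 * K := by
      intro t ht0 ht1
      have hmem : ∑ i, |p i + t * (q i - p i)| ≤ 1 := by
        calc ∑ i, |p i + t * (q i - p i)|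
            ≤ ∑ i, ((1 - t) * |p i| + t * |q i|) := by
              apply Finset.sum_le_sum
              intro i _
              have h : p i + t * (q i - p i) = (1 - t) * p i + t * q i := by ring
              rw [h]
              calc |(1 - t) * p i + t * q i| ≤ |(1 - t) * p i| + |t * q i| := abs_add_le _ _
                _ = (1 - t) * |p i| + t * |q i| := by
                    rw [abs_mul, abs_mul, abs_of_nonneg (by linarith), abs_of_nonneg ht0.le]
          _ = (1 - t) * (∑ i, |p i|) + t * (∑ i, |q i|) := by
              rw [Finset.sum_add_distrib, Finset.mul_sum, Finset.mul_sum]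
          _ ≤ 1 := by nlinarith [hp_mem, hq, Finset.sum_nonneg (fun i (_ : i ∈ Finset.univ) => abs_nonneg (p i)), Finset.sum_nonneg (fun i (_ : i ∈ Finset.univ) => abs_nonneg (q i))]
      have hpp := hp_proj (fun i => p i + t * (q i - p i)) hmem
      have hexp : ∑ i, (b i - (p i + t * (q i - p i))) ^ 2
          = ∑ i, ((b i - p i) ^ 2 - 2 * t * ((b i - p i) * (q i - p i))
              + t ^ 2 * (q i - p i) ^ 2) :=
        Finset.sum_congr rfl fun i _ => by ring
      rw [hexp, Finset.sum_add_distrib, Finset.sum_sub_distrib, ← Finset.mul_sum,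
        ← Finset.mul_sum] at hpp
      linarith [hpp]
    by_contra hS0
    push_neg at hS0
    rcases eq_or_lt_of_le hK0 with hK1 | hK1
    · have h2 := key 1 one_pos le_rfl
      nlinarith
    · have ht0 : 0 < min 1 (S / K) := lt_min one_pos (div_pos hS0 hK1)
      have ht1 : min 1 (S / K) ≤ 1 := min_le_left _ _
      have h2 := key _ ht0 ht1
      have htS : min 1 (S / K) * K ≤ S := (le_div_iff₀ hK1).mp (min_le_right _ _)
      nlinarith [mul_le_mul_of_nonneg_left htS ht0.le, mul_pos ht0 hS0]
  have hNnonneg : ∀ y : Fin n → ℝ, 0 ≤ linftyNorm y := fun y =>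
    Real.sSup_nonneg (by rintro v ⟨i, rfl⟩; exact abs_nonneg _)
  have habs_le : ∀ (y : Fin n → ℝ) (i : Fin n), |y i| ≤ linftyNorm y := fun y i =>
    le_csSup ((Set.finite_range _).bddAbove) ⟨i, rfl⟩
  have hholder : ∀ y : Fin n → ℝ, ∑ i, p i * y i ≤ linftyNorm y := by
    intro y
    calc ∑ i, p i * y i ≤ ∑ i, |p i| * linftyNorm y := by
          apply Finset.sum_le_sum
          intro i _
          calc p i * y i ≤ |p i * y i| := le_abs_self _
            _ = |p i| * |y i| := abs_mul _ _
            _ ≤ |p i| * linftyNorm y := mul_le_mul_of_nonneg_left (habs_le y i) (abs_nonneg _)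
      _ = (∑ i, |p i|) * linftyNorm y := (Finset.sum_mul ..).symm
      _ ≤ 1 * linftyNorm y := mul_le_mul_of_nonneg_right hp_mem (hNnonneg y)
      _ = linftyNorm y := one_mul _
  have hkey : ∀ j, a j - lam * p j = lam * (b j - p j) := fun j => by
    rw [hb, mul_sub, mul_div_cancel₀ _ hlam.ne']
  have hB : linftyNorm (fun i => a i - lam * p i) ≤ ∑ i, p i * (a i - lam * p i) := by
    rcases Nat.eq_zero_or_pos n with h0 | h0
    · subst h0
      simp [linftyNorm, Set.range_eq_empty, Real.sSup_empty]
    · haveI : Nonempty (Fin n) := Fin.pos_iff_nonempty.mp h0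
      apply csSup_le (Set.range_nonempty _)
      rintro v ⟨i, rfl⟩
      set s : ℝ := if 0 ≤ b i - p i then 1 else -1 with hs
      have hq : ∑ j, |(fun j => if j = i then s else 0) j| ≤ 1 := by
        have h1 : ∑ j, |(fun j => if j = i then s else 0) j| = |s| := by
          rw [Finset.sum_eq_single i]
          · simp
          · intro j _ hj; simp [hj]
          · intro h; exact absurd (Finset.mem_univ i) h
        rw [h1, hs]
        split_ifs <;> norm_num
      have hv := hvar _ hq
      have hsum : ∑ j, (b j - p j) * ((fun j => if j = i then s else 0) j - p j)
          = s * (b i - p i) - ∑ j, (b j - p j) * p j := by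
        have h1 : ∀ j, (b j - p j) * ((fun j => if j = i then s else 0) j - p j)
            = (if j = i then s * (b j - p j) else 0) - (b j - p j) * p j := by
          intro j; by_cases h : j = i <;> simp [h] <;> ring
        rw [Finset.sum_congr rfl fun j _ => h1 j, Finset.sum_sub_distrib,
          Finset.sum_ite_eq' Finset.univ i]
        simp
      rw [hsum] at hv
      have habs : |b i - p i| = s * (b i - p i) := by
        rw [hs]; split_ifs with h
        · rw [abs_of_nonneg h]; ring
        · rw [abs_of_neg (lt_of_not_ge h)]; ring
      have h1 : |b i - p i| ≤ ∑ j, p j * (b j - p j) := by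
        rw [habs]
        have h2 : ∑ j, (b j - p j) * p j = ∑ j, p j * (b j - p j) :=
          Finset.sum_congr rfl fun j _ => mul_comm _ _
        linarith [hv, h2 ▸ hv]
      calc |a i - lam * p i| = lam * |b i - p i| := by
            rw [hkey i, abs_mul, abs_of_pos hlam]
        _ ≤ lam * ∑ j, p j * (b j - p j) := mul_le_mul_of_nonneg_left h1 hlam.le
        _ = ∑ j, p j * (a j - lam * p j) := by
            rw [Finset.mul_sum]
            exact Finset.sum_congr rfl fun j _ => by rw [hkey j]; ring
  have h1 : ∑ i, p i * x i ≤ linftyNorm x := hholder x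
  have h3 : 0 < ∑ i, (x i - (a i - lam * p i)) ^ 2 := by
    obtain ⟨i, hi⟩ := Function.ne_iff.mp hx
    have hne : x i - (a i - lam * p i) ≠ 0 := sub_ne_zero.mpr hi
    exact Finset.sum_pos' (fun j _ => sq_nonneg _) ⟨i, Finset.mem_univ i, by positivity⟩
  have h4 : ∑ i, (a i - x i) ^ 2
      = ∑ i, (a i - (a i - lam * p i)) ^ 2 - 2 * lam * (∑ i, p i * x i)
        + 2 * lam * (∑ i, p i * (a i - lam * p i))
        + ∑ i, (x i - (a i - lam * p i)) ^ 2 := by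
    have h5 : ∀ i, (a i - x i) ^ 2
        = (a i - (a i - lam * p i)) ^ 2 - 2 * lam * (p i * x i)
          + 2 * lam * (p i * (a i - lam * p i)) + (x i - (a i - lam * p i)) ^ 2 :=
      fun i => by ring
    rw [Finset.sum_congr rfl fun i _ => h5 i, Finset.sum_add_distrib, Finset.sum_add_distrib,
      Finset.sum_sub_distrib, ← Finset.mul_sum, ← Finset.mul_sum]
  have hB' : lam * linftyNorm (fun i => a i - lam * p i)
      ≤ lam * ∑ i, p i * (a i - lam * p i) := mul_le_mul_of_nonneg_left hB hlam.le
  have h1' : lam * (∑ i, p i * x i) ≤ lam * linftyNorm x := mul_le_mul_of_nonneg_left h1 hlam.le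
  linarith [h3, h4, hB', h1']
end
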